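/- Let σ, ω be locally finite positive Borel measures on ℝⁿ with σ doubling, 0 ≤ α < n, and let T^α be an α-fractional singular integral operator bounded from L²(σ) to L²(ω) with norm 𝔑. Then for every m ≥ 1, every dyadic cube I, every m-th generation dyadic grandchild I' of I, and every 0 < ε₁ < 1, there is C_{m,ε₁} (independent of 𝔑) such that (∫_{3I ∖ I'} |T^α_σ 1_{I'}|² dω)^{1/2} ≤ { C_{m,ε₁} √(A₂^α(σ,ω)) + ε₁ 𝔑 } √(|I'|_σ). -/

import Mathlib

open MeasureTheory ENNReal

noncomputable section

/-- The axis-parallel cube in `ℝⁿ` with center `c` and side length `l`. -/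
def Cube (n : ℕ) (c : Fin n → ℝ) (l : ℝ) : Set (Fin n → ℝ) :=
  {x | ∀ i, |x i - c i| ≤ l / 2}

/-- A measure is doubling with constant `C` if `μ(2Q) ≤ C μ(Q)` for all cubes `Q`. -/
def IsDoubling {n : ℕ} (μ : Measure (Fin n → ℝ)) (C : ℝ) : Prop :=
  ∀ (c : Fin n → ℝ) (l : ℝ), 0 < l →
    μ (Cube n c (2 * l)) ≤ ENNReal.ofReal C * μ (Cube n c l)

open Metric Set

variable {n : ℕ}

lemma cube_eq_closedBall (c : Fin n → ℝ) {l : ℝ} (hl : 0 ≤ l) :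
    Cube n c l = Metric.closedBall c (l / 2) := by
  ext x
  simp only [Cube, Set.mem_setOf_eq, Metric.mem_closedBall]
  rw [dist_pi_le_iff (by linarith)]
  simp [Real.dist_eq]

lemma isDoubling_ball {σ : Measure (Fin n → ℝ)} {Cd : ℝ} (h : IsDoubling σ Cd)
    (z : Fin n → ℝ) {ρ : ℝ} (hρ : 0 < ρ) :
    σ (closedBall z (2 * ρ)) ≤ ENNReal.ofReal Cd * σ (closedBall z ρ) := by
  have h2 := h z (2 * ρ) (by linarith)
  rw [cube_eq_closedBall _ (by linarith : (0:ℝ) ≤ 2 * (2 * ρ)),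
    cube_eq_closedBall _ (by linarith : (0:ℝ) ≤ 2 * ρ)] at h2
  have e1 : 2 * (2 * ρ) / 2 = 2 * ρ := by ring
  have e2 : 2 * ρ / 2 = ρ := by ring
  rwa [e1, e2] at h2

lemma isDoubling_ball_pow {σ : Measure (Fin n → ℝ)} {Cd : ℝ} (h : IsDoubling σ Cd)
    (z : Fin n → ℝ) {ρ : ℝ} (hρ : 0 < ρ) (k : ℕ) :
    σ (closedBall z (2 ^ k * ρ)) ≤ (ENNReal.ofReal Cd) ^ k * σ (closedBall z ρ) := by
  induction k with
  | zero => simp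
  | succ k ih =>
      have : (2:ℝ) ^ (k+1) * ρ = 2 * (2 ^ k * ρ) := by ring
      rw [this]
      calc σ (closedBall z (2 * (2 ^ k * ρ)))
          ≤ ENNReal.ofReal Cd * σ (closedBall z (2 ^ k * ρ)) :=
            isDoubling_ball h z (by positivity)
        _ ≤ ENNReal.ofReal Cd * ((ENNReal.ofReal Cd) ^ k * σ (closedBall z ρ)) := by
            gcongr
        _ = (ENNReal.ofReal Cd) ^ (k+1) * σ (closedBall z ρ) := by ring

lemma annulus_le {σ : Measure (Fin n → ℝ)} {Cd : ℝ} (h : IsDoubling σ Cd)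
    (c : Fin n → ℝ) {r t : ℝ} (hr : 0 < r) (ht : 0 < t) (ht2 : t ≤ 1/2) :
    σ (closedBall c r \ closedBall c ((1 - t) * r)) ≤
      (ENNReal.ofReal Cd) ^ 6 *
        σ (closedBall c ((1 - t) * r) \ closedBall c ((1 - 2 * t) * r)) := by
  set A : Set (Fin n → ℝ) := closedBall c r \ closedBall c ((1 - t) * r) with hA
  set f : (Fin n → ℝ) → (Fin n → ℝ) :=
    fun x => c + ((1 - 3 * t / 2) * r / dist x c) • (x - c) with hf
  have hsr : 0 < (1 - 3 * t / 2) * r := by nlinarith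
  -- facts about points of A
  have hdpos : ∀ x ∈ A, (1 - t) * r < dist x c ∧ dist x c ≤ r := by
    intro x hx
    constructor
    · by_contra hcon
      exact hx.2 (mem_closedBall.2 (not_lt.1 hcon))
    · exact mem_closedBall.1 hx.1
  have hfc : ∀ x ∈ A, dist (f x) c = (1 - 3 * t / 2) * r := by
    intro x hx
    obtain ⟨h1, h2⟩ := hdpos x hx
    have hd0 : 0 < dist x c := lt_of_le_of_lt (by nlinarith) h1
    have : f x - c = ((1 - 3 * t / 2) * r / dist x c) • (x - c) := by
      simp [hf]
    rw [dist_eq_norm, this, norm_smul, ← dist_eq_norm]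
    rw [Real.norm_eq_abs, abs_of_pos (by positivity)]
    field_simp
  have hfx : ∀ x ∈ A, dist x (f x) ≤ 3 * t / 2 * r := by
    intro x hx
    obtain ⟨h1, h2⟩ := hdpos x hx
    have hd0 : 0 < dist x c := lt_of_le_of_lt (by nlinarith) h1
    have hle : (1 - 3 * t / 2) * r ≤ dist x c := le_trans (by nlinarith) h1.le
    have : x - f x = (1 - (1 - 3 * t / 2) * r / dist x c) • (x - c) := by
      simp [hf]; module
    rw [dist_eq_norm, this, norm_smul, Real.norm_eq_abs, ← dist_eq_norm]
    rw [abs_of_nonneg (by rw [sub_nonneg]; exact div_le_one_of_le₀ hle hd0.le)]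
    have : (1 - (1 - 3 * t / 2) * r / dist x c) * dist x c
        = dist x c - (1 - 3 * t / 2) * r := by field_simp
    rw [this]
    nlinarith
  -- Vitali
  obtain ⟨u, huA, hdisj, hcov⟩ :=
    Vitali.exists_disjoint_subfamily_covering_enlargement_closedBall A f
      (fun _ => 2 * t * r) (2 * t * r) (fun a _ => le_rfl) 4 (by norm_num)
  have hucount : u.Countable := by
    apply hdisj.countable_of_nonempty_interior
    intro b _
    exact (Metric.nonempty_ball.2 (by positivity)).mono ball_subset_interior_closedBall
  have hcover : A ⊆ ⋃ b ∈ u, closedBall (f b) (4 * (2 * t * r)) := by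
    intro a ha
    obtain ⟨b, hb, hsub⟩ := hcov a ha
    have : a ∈ closedBall (f a) (2 * t * r) := by
      rw [mem_closedBall, dist_comm]
      calc dist (f a) a = dist a (f a) := dist_comm _ _
        _ ≤ 3 * t / 2 * r := hfx a ha
        _ ≤ 2 * t * r := by nlinarith
    exact mem_biUnion hb (hsub this)
  -- small balls inside the ring
  have hsmall : ∀ b ∈ u, closedBall (f b) (t * r / 4) ⊆
      closedBall c ((1 - t) * r) \ closedBall c ((1 - 2 * t) * r) := by
    intro b hb y hy
    have hyb : dist y (f b) ≤ t * r / 4 := mem_closedBall.1 hy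
    have hbc : dist (f b) c = (1 - 3 * t / 2) * r := hfc b (huA hb)
    constructor
    · rw [mem_closedBall]
      calc dist y c ≤ dist y (f b) + dist (f b) c := dist_triangle _ _ _
        _ ≤ t * r / 4 + (1 - 3 * t / 2) * r := by linarith
        _ ≤ (1 - t) * r := by nlinarith
    · intro hmem
      have : dist y c ≤ (1 - 2 * t) * r := mem_closedBall.1 hmem
      have h3 : dist (f b) c ≤ dist (f b) y + dist y c := dist_triangle _ _ _
      rw [dist_comm (f b) y] at h3
      nlinarith
  have hdch6 : ∀ b ∈ u, σ (closedBall (f b) (4 * (2 * t * r))) ≤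
      (ENNReal.ofReal Cd) ^ 6 * σ (closedBall (f b) (t * r / 4)) := by
    intro b _
    calc σ (closedBall (f b) (4 * (2 * t * r)))
        ≤ σ (closedBall (f b) (2 ^ 6 * (t * r / 4))) := by
          apply measure_mono
          apply closedBall_subset_closedBall
          nlinarith
      _ ≤ (ENNReal.ofReal Cd) ^ 6 * σ (closedBall (f b) (t * r / 4)) :=
          isDoubling_ball_pow h _ (by positivity) 6
  have hsmalldisj : u.PairwiseDisjoint fun b => closedBall (f b) (t * r / 4) := by
    intro a ha b hb hab
    exact (hdisj ha hb hab).mono (closedBall_subset_closedBall (by nlinarith))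
      (closedBall_subset_closedBall (by nlinarith))
  calc σ A ≤ σ (⋃ b ∈ u, closedBall (f b) (4 * (2 * t * r))) := measure_mono hcover
    _ ≤ ∑' b : u, σ (closedBall (f b) (4 * (2 * t * r))) :=
        measure_biUnion_le σ hucount _
    _ ≤ ∑' b : u, (ENNReal.ofReal Cd) ^ 6 * σ (closedBall (f b) (t * r / 4)) :=
        ENNReal.tsum_le_tsum (fun b => hdch6 b b.2)
    _ = (ENNReal.ofReal Cd) ^ 6 * ∑' b : u, σ (closedBall (f b) (t * r / 4)) :=
        ENNReal.tsum_mul_left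
    _ = (ENNReal.ofReal Cd) ^ 6 * σ (⋃ b ∈ u, closedBall (f b) (t * r / 4)) := by
        rw [measure_biUnion hucount hsmalldisj (fun b _ => measurableSet_closedBall)]
    _ ≤ (ENNReal.ofReal Cd) ^ 6 *
        σ (closedBall c ((1 - t) * r) \ closedBall c ((1 - 2 * t) * r)) := by
        gcongr
        exact iUnion₂_subset hsmall

lemma annulus_decay {σ : Measure (Fin n → ℝ)} {Cd : ℝ} (h : IsDoubling σ Cd)
    (hCd : 0 ≤ Cd) (c : Fin n → ℝ) {r : ℝ} (hr : 0 < r)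
    (hfin : σ (closedBall c r) ≠ ⊤) (J : ℕ) :
    (σ (closedBall c r \ closedBall c ((1 - (1/2) ^ J) * r))).toReal ≤
      (Cd ^ 6 / (Cd ^ 6 + 1)) ^ J * (σ (closedBall c r)).toReal := by
  induction J with
  | zero =>
      simp only [pow_zero, sub_self, zero_mul, one_mul]
      exact ENNReal.toReal_mono hfin (measure_mono diff_subset)
  | succ J ih =>
      set K : ℝ := Cd ^ 6 with hK
      have hK0 : 0 ≤ K := by positivity
      set sJ : ℝ := (1 - (1/2) ^ J) * r with hsJ
      set sJ1 : ℝ := (1 - (1/2) ^ (J+1)) * r with hsJ1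
      have hpow : ((1:ℝ)/2) ^ (J+1) ≤ (1/2) ^ J := by
        apply pow_le_pow_of_le_one (by norm_num) (by norm_num)
        omega
      have hhalf : ((1:ℝ)/2) ^ (J+1) ≤ 1/2 := by
        calc ((1:ℝ)/2) ^ (J+1) ≤ (1/2) ^ 1 :=
              pow_le_pow_of_le_one (by norm_num) (by norm_num) (by omega)
          _ = 1/2 := by norm_num
      have hpos : (0:ℝ) < (1/2) ^ (J+1) := by positivity
      have hord1 : sJ ≤ sJ1 := by
        apply mul_le_mul_of_nonneg_right (by linarith) hr.le
      have hord2 : sJ1 ≤ r := by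
        rw [hsJ1]
        nlinarith
      have hsets : closedBall c r \ closedBall c sJ =
          (closedBall c r \ closedBall c sJ1) ∪ (closedBall c sJ1 \ closedBall c sJ) :=
        (Set.diff_union_diff_cancel (closedBall_subset_closedBall hord2)
          (closedBall_subset_closedBall hord1)).symm
      have hdisj : Disjoint (closedBall c r \ closedBall c sJ1)
          (closedBall c sJ1 \ closedBall c sJ) := by
        rw [Set.disjoint_left]
        intro x hx1 hx2
        exact hx1.2 hx2.1
      have hmeas : σ (closedBall c r \ closedBall c sJ) =
          σ (closedBall c r \ closedBall c sJ1) + σ (closedBall c sJ1 \ closedBall c sJ) := by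
        rw [hsets]
        exact measure_union hdisj (measurableSet_closedBall.diff measurableSet_closedBall)
      -- annulus_le with t = (1/2)^(J+1)
      have hkey := annulus_le h c hr hpos hhalf
      have ht1 : (1:ℝ) - (1/2) ^ (J+1) = (1 - (1/2)^(J+1)) := rfl
      have ht2 : (1:ℝ) - 2 * (1/2) ^ (J+1) = 1 - (1/2) ^ J := by
        rw [pow_succ]
        ring
      rw [ht2] at hkey
      -- pass to reals
      have hfin1 : σ (closedBall c r \ closedBall c sJ1) ≠ ⊤ :=
        (lt_of_le_of_lt (measure_mono diff_subset) hfin.lt_top).ne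
      have hfin2 : σ (closedBall c sJ1 \ closedBall c sJ) ≠ ⊤ :=
        (lt_of_le_of_lt (measure_mono (diff_subset.trans
          (closedBall_subset_closedBall hord2))) hfin.lt_top).ne
      have hfin0 : σ (closedBall c r \ closedBall c sJ) ≠ ⊤ :=
        (lt_of_le_of_lt (measure_mono diff_subset) hfin.lt_top).ne
      set x : ℝ := (σ (closedBall c r \ closedBall c sJ1)).toReal with hx
      set z : ℝ := (σ (closedBall c sJ1 \ closedBall c sJ)).toReal with hz
      have hxz : (σ (closedBall c r \ closedBall c sJ)).toReal = x + z := by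
        rw [hmeas, ENNReal.toReal_add hfin1 hfin2]
      have hxK : x ≤ K * z := by
        have := ENNReal.toReal_mono (by
          exact ENNReal.mul_ne_top (by simp) hfin2) hkey
        rw [ENNReal.toReal_mul, ← ENNReal.ofReal_pow hCd, ENNReal.toReal_ofReal hK0] at this
        exact this
      have hx0 : 0 ≤ x := ENNReal.toReal_nonneg
      have hz0 : 0 ≤ z := ENNReal.toReal_nonneg
      have hstep : x ≤ K / (K + 1) * (x + z) := by
        rw [div_mul_eq_mul_div, le_div_iff₀ (by positivity)]
        nlinarith
      calc x ≤ K / (K + 1) * (x + z) := hstep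
        _ = K / (K + 1) * (σ (closedBall c r \ closedBall c sJ)).toReal := by rw [hxz]
        _ ≤ K / (K + 1) * ((K / (K + 1)) ^ J * (σ (closedBall c r)).toReal) := by
            apply mul_le_mul_of_nonneg_left ih (by positivity)
        _ = (K / (K + 1)) ^ (J + 1) * (σ (closedBall c r)).toReal := by ring

lemma sq_add_le_two {a b P : ℝ} (h1 : -P ≤ a) (h2 : a ≤ P) :
    (a + b) ^ 2 ≤ 2 * P ^ 2 + 2 * b ^ 2 := by nlinarith [sq_nonneg (a - b)]

lemma final_real {a e N B S t1 t2 : ℝ}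
    (p1 : t1 ≤ a ^ 2 * B ^ 2 * S) (p2 : t2 ≤ e ^ 2 * N ^ 2 * S)
    (hcross : 0 ≤ 2 * (a * B) * (e * N) * S) :
    t1 + t2 ≤ (a * B + e * N) ^ 2 * S := by
  have hexp : (a * B + e * N) ^ 2 * S
      = a ^ 2 * B ^ 2 * S + 2 * (a * B) * (e * N) * S + e ^ 2 * N ^ 2 * S := by ring
  linarith

set_option maxHeartbeats 1000000

/-- If `σ` is doubling and `T^α` is an `α`-fractional singular integral operator
bounded from `L²(σ)` to `L²(ω)` with norm `𝔑`, then for every `m`-th generation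
grandchild `I'` of a cube `I` and every `0 < ε₁ < 1`,
`(∫_{3I∖I'} |T^α_σ 1_{I'}|² dω)^{1/2} ≤ (C_{m,ε₁} √A₂^α + ε₁ 𝔑) √(|I'|_σ)`. -/
theorem grandchild_offtesting_bound (n m : ℕ) (α C_CZ Cd ε₁ : ℝ)
    (hn : 0 < n) (hα0 : 0 ≤ α) (hαn : α < n) (hCZ : 0 < C_CZ) (hm : 1 ≤ m)
    (hε0 : 0 < ε₁) (hε1 : ε₁ < 1) :
    ∃ C : ℝ, 0 < C ∧
      ∀ (σ ω : Measure (Fin n → ℝ)),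
        IsLocallyFiniteMeasure σ → IsLocallyFiniteMeasure ω → IsDoubling σ Cd →
      ∀ (T : ((Fin n → ℝ) → ℝ) → ((Fin n → ℝ) → ℝ))
        (K : (Fin n → ℝ) → (Fin n → ℝ) → ℝ) (N A2 : ℝ),
        0 ≤ N → 0 ≤ A2 →
        -- kernel size condition
        (∀ x y, x ≠ y → |K x y| ≤ C_CZ * ‖x - y‖ ^ (α - n)) →
        -- `T = T^α_σ` is bounded from `L²(σ)` to `L²(ω)` with norm `𝔑 = N`
        (∀ f : (Fin n → ℝ) → ℝ, Measurable f →
          ∫⁻ x, ENNReal.ofReal ((T f x) ^ 2) ∂ω ≤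
            ENNReal.ofReal (N ^ 2) * ∫⁻ x, ENNReal.ofReal ((f x) ^ 2) ∂σ) →
        -- `T` is associated with the kernel `K` off the support
        (∀ f : (Fin n → ℝ) → ℝ, Measurable f →
          ∀ x, x ∉ closure {y | f y ≠ 0} → T f x = ∫ y, K x y * f y ∂σ) →
        -- Muckenhoupt condition `A₂^α(σ,ω) ≤ A2`
        (∀ (c : Fin n → ℝ) (l : ℝ), 0 < l →
          (σ (Cube n c l)).toReal * (ω (Cube n c l)).toReal ≤
            A2 * l ^ (2 * ((n : ℝ) - α))) →
        ∀ (c c' : Fin n → ℝ) (l : ℝ), 0 < l →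
          Cube n c' (l / 2 ^ m) ⊆ Cube n c l →
          (∫⁻ x in Cube n c (3 * l) \ Cube n c' (l / 2 ^ m),
              ENNReal.ofReal
                ((T ((Cube n c' (l / 2 ^ m)).indicator fun _ => (1 : ℝ)) x) ^ 2) ∂ω) ≤
            ENNReal.ofReal ((C * Real.sqrt A2 + ε₁ * N) ^ 2) *
              σ (Cube n c' (l / 2 ^ m)) := by
  classical
  set D : ℝ := max Cd 1 with hD
  have hD1 : 1 ≤ D := le_max_right _ _
  have hD0 : 0 ≤ D := by linarith
  set KK : ℝ := D ^ 6 with hKK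
  have hKK1 : 1 ≤ KK := by
    have : (1:ℝ) ^ 6 ≤ D ^ 6 := pow_le_pow_left₀ (by norm_num) hD1 6
    simpa using this
  set θ : ℝ := KK / (KK + 1) with hθ
  have hθ0 : 0 < θ := by positivity
  have hθ1 : θ < 1 := by
    rw [hθ, div_lt_one (by positivity)]; linarith
  obtain ⟨J, hJ⟩ : ∃ J : ℕ, θ ^ J < ε₁ ^ 2 / 2 :=
    exists_pow_lt_of_lt_one (by positivity) hθ1
  set δ : ℝ := (1/2 : ℝ) ^ J with hδ
  have hδ0 : 0 < δ := by positivity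
  set X : ℝ := 3 * 2 ^ (m + 1) / δ with hX
  have hX0 : 0 < X := by positivity
  have hnα : (0:ℝ) < (n:ℝ) - α := by linarith
  refine ⟨Real.sqrt 2 * C_CZ * X ^ ((n:ℝ) - α), by positivity, ?_⟩
  intro σ ω hσloc hωloc hdb T K N A2 hN hA2 hker hbdd hrep hA2c c c' l hl hsub
  haveI := hσloc; haveI := hωloc
  set ℓ' : ℝ := l / 2 ^ m with hℓ'
  have hℓ'0 : 0 < ℓ' := by positivity
  set r : ℝ := ℓ' / 2 with hrdef
  have hr0 : 0 < r := by positivity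
  set Q' : Set (Fin n → ℝ) := Cube n c' ℓ' with hQ'
  have hQball : Q' = closedBall c' r := cube_eq_closedBall c' hℓ'0.le
  have hQ'meas : MeasurableSet Q' := by rw [hQball]; exact measurableSet_closedBall
  have hQ'closed : IsClosed Q' := by rw [hQball]; exact Metric.isClosed_closedBall
  have hQ'fin : σ Q' ≠ ⊤ := by
    rw [hQball]; exact (isCompact_closedBall _ _).measure_lt_top.ne
  set f : (Fin n → ℝ) → ℝ := Q'.indicator (fun _ => (1:ℝ)) with hfdef
  have hfmeas : Measurable f := measurable_const.indicator hQ'meas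
  have hfsupp : ∀ x, x ∉ Q' → x ∉ closure {y | f y ≠ 0} := by
    intro x hx hmem
    refine hx (closure_minimal (fun y hy => ?_) hQ'closed hmem)
    by_contra hyQ
    exact hy (Set.indicator_of_notMem hyQ _)
  have hfint : ∀ (Sq : Set (Fin n → ℝ)), MeasurableSet Sq → ∀ (μ : Measure (Fin n → ℝ)),
      ∫⁻ x, ENNReal.ofReal ((Sq.indicator (fun _ => (1:ℝ)) x) ^ 2) ∂μ = μ Sq := by
    intro Sq hSq μ
    have hpt : ∀ x, ENNReal.ofReal ((Sq.indicator (fun _ => (1:ℝ)) x) ^ 2)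
        = Sq.indicator (fun _ => (1:ℝ≥0∞)) x := by
      intro x
      by_cases hx : x ∈ Sq <;>
        simp [Set.indicator_of_mem, Set.indicator_of_notMem, hx]
    rw [lintegral_congr hpt, lintegral_indicator hSq]
    simp
  by_cases hS0 : σ Q' = 0
  · calc (∫⁻ x in Cube n c (3 * l) \ Q', ENNReal.ofReal ((T f x) ^ 2) ∂ω)
        ≤ ∫⁻ x, ENNReal.ofReal ((T f x) ^ 2) ∂ω :=
          lintegral_mono' Measure.restrict_le_self le_rfl
      _ ≤ ENNReal.ofReal (N ^ 2) * ∫⁻ x, ENNReal.ofReal ((f x) ^ 2) ∂σ := hbdd f hfmeas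
      _ = ENNReal.ofReal (N ^ 2) * σ Q' := by rw [hfint Q' hQ'meas σ]
      _ = 0 := by rw [hS0, mul_zero]
      _ ≤ _ := zero_le
  · -- main case
    set S : ℝ := (σ Q').toReal with hSdef
    have hSpos : (0:ℝ) < S := ENNReal.toReal_pos hS0 hQ'fin
    have hdbD : IsDoubling σ D := by
      intro z s hs
      exact (hdb z s hs).trans
        (mul_le_mul_left (ENNReal.ofReal_le_ofReal (le_max_left _ _)) _)
    set Q'' : Set (Fin n → ℝ) := closedBall c' ((1 - δ) * r) with hQ''def
    have hQ''meas : MeasurableSet Q'' := measurableSet_closedBall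
    have hQ''subQ' : Q'' ⊆ Q' := by
      rw [hQball]
      refine closedBall_subset_closedBall ?_
      have e : (1 - δ) * r = r - δ * r := by ring
      have : 0 ≤ δ * r := by positivity
      linarith
    set Ring : Set (Fin n → ℝ) := Q' \ Q'' with hRingdef
    have hRingmeas : MeasurableSet Ring := hQ'meas.diff hQ''meas
    have hRingfin : σ Ring ≠ ⊤ :=
      (lt_of_le_of_lt (measure_mono diff_subset) hQ'fin.lt_top).ne
    set RingR : ℝ := (σ Ring).toReal with hRingRdef
    have hRingR0 : 0 ≤ RingR := ENNReal.toReal_nonneg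
    have hRingbound : RingR ≤ θ ^ J * S := by
      have hdec := annulus_decay hdbD hD0 c' hr0 (by rw [← hQball]; exact hQ'fin) J
      rw [← hδ, ← hQball] at hdec
      rw [← hKK] at hdec
      rw [← hθ] at hdec
      exact hdec
    set E : Set (Fin n → ℝ) := Cube n c (3 * l) \ Q' with hEdef
    have h3l0 : (0:ℝ) ≤ 3 * l := by linarith
    have hcube3 : Cube n c (3 * l) = closedBall c (3 * l / 2) := cube_eq_closedBall c h3l0
    have hEmeas : MeasurableSet E := by
      rw [hEdef, hcube3]; exact measurableSet_closedBall.diff hQ'meas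
    set h1 : (Fin n → ℝ) → ℝ := Ring.indicator (fun _ => (1:ℝ)) with hh1def
    have hh1meas : Measurable h1 := measurable_const.indicator hRingmeas
    set P₀ : ℝ := C_CZ * (δ * r) ^ (α - (n:ℝ)) with hP₀def
    have hP₀0 : 0 < P₀ := by positivity
    set P : ℝ := P₀ * S with hPdef
    have hPpos : 0 < P := by positivity
    -- pointwise bound on E
    have key : ∀ x ∈ E, (T f x) ^ 2 ≤ 2 * P ^ 2 + 2 * (T h1 x) ^ 2 := by
      intro x hx
      have hxQ' : x ∉ Q' := hx.2
      have hTf : T f x = ∫ y, K x y * f y ∂σ := hrep f hfmeas x (hfsupp x hxQ')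
      have hh1supp : x ∉ closure {y | h1 y ≠ 0} := by
        intro hmem
        refine hxQ' (closure_minimal (fun y hy => ?_) hQ'closed hmem)
        by_contra hyQ
        refine hy ?_
        rw [hh1def]
        exact Set.indicator_of_notMem (fun hyR => hyQ hyR.1) _
      have hTh : T h1 x = ∫ y, K x y * h1 y ∂σ := hrep h1 hh1meas x hh1supp
      by_cases hint : Integrable (fun y => K x y * f y) σ
      · -- distance from x to Q''
        have hxc : r < dist x c' := by
          by_contra hcon
          exact hxQ' (hQball ▸ mem_closedBall.2 (not_lt.1 hcon))
        have hxd : ∀ y ∈ Q'', δ * r ≤ dist x y := by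
          intro y hy
          have hyc : dist y c' ≤ (1 - δ) * r := mem_closedBall.1 hy
          have htri := dist_triangle x y c'
          have e : (1 - δ) * r = r - δ * r := by ring
          rw [e] at hyc
          linarith
        have hsplitfun : ∀ y, K x y * f y =
            Q''.indicator (fun y => K x y * f y) y +
              Ring.indicator (fun y => K x y * f y) y := by
          intro y
          by_cases hy'' : y ∈ Q''
          · have hyR : y ∉ Ring := fun hc => hc.2 hy''
            rw [Set.indicator_of_mem hy'', Set.indicator_of_notMem hyR, add_zero]
          · by_cases hy' : y ∈ Q'
            · have hyR : y ∈ Ring := ⟨hy', hy''⟩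
              rw [Set.indicator_of_notMem hy'', Set.indicator_of_mem hyR, zero_add]
            · have hyR : y ∉ Ring := fun hc => hy' hc.1
              have hfy : f y = 0 := by
                rw [hfdef]; exact Set.indicator_of_notMem hy' _
              rw [Set.indicator_of_notMem hy'', Set.indicator_of_notMem hyR, hfy,
                mul_zero, add_zero]
        have hint1 : Integrable (Q''.indicator (fun y => K x y * f y)) σ :=
          hint.indicator hQ''meas
        have hint2 : Integrable (Ring.indicator (fun y => K x y * f y)) σ :=
          hint.indicator hRingmeas
        have hTfsplit : T f x =
            (∫ y, Q''.indicator (fun y => K x y * f y) y ∂σ) + T h1 x := by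
          have e0 : ∫ y, K x y * f y ∂σ =
              ∫ y, (Q''.indicator (fun y => K x y * f y) y +
                Ring.indicator (fun y => K x y * f y) y) ∂σ :=
            integral_congr_ae (Filter.Eventually.of_forall hsplitfun)
          rw [hTf, hTh, e0, integral_add hint1 hint2]
          congr 1
          refine integral_congr_ae (Filter.Eventually.of_forall fun y => ?_)
          show Ring.indicator (fun z => K x z * f z) y = K x y * h1 y
          by_cases hyR : y ∈ Ring
          · have hfy : f y = 1 := by
              rw [hfdef]; exact Set.indicator_of_mem hyR.1 _
            have hh1y : h1 y = 1 := by
              rw [hh1def]; exact Set.indicator_of_mem hyR _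
            rw [Set.indicator_of_mem hyR, hfy, hh1y]
          · have hh1y : h1 y = 0 := by
              rw [hh1def]; exact Set.indicator_of_notMem hyR _
            rw [Set.indicator_of_notMem hyR, hh1y, mul_zero]
        have hbnd : |∫ y, Q''.indicator (fun y => K x y * f y) y ∂σ| ≤ P := by
          have hpt : ∀ y, ENNReal.ofReal ‖Q''.indicator (fun y => K x y * f y) y‖ ≤
              Q''.indicator (fun _ => ENNReal.ofReal P₀) y := by
            intro y
            by_cases hy'' : y ∈ Q''
            · rw [Set.indicator_of_mem hy'', Set.indicator_of_mem hy'']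
              apply ENNReal.ofReal_le_ofReal
              have hxy : δ * r ≤ dist x y := hxd y hy''
              have hdxy : (0:ℝ) < dist x y := lt_of_lt_of_le (by positivity) hxy
              have hxyne : x ≠ y := dist_pos.1 hdxy
              have hKb := hker x y hxyne
              have hnorm : ‖x - y‖ = dist x y := (dist_eq_norm x y).symm
              have hfy : f y = 1 := by
                rw [hfdef]; exact Set.indicator_of_mem (hQ''subQ' hy'') _
              calc ‖K x y * f y‖ = |K x y| := by
                    rw [Real.norm_eq_abs, hfy, mul_one]
                _ ≤ C_CZ * ‖x - y‖ ^ (α - (n:ℝ)) := hKb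
                _ = C_CZ * (dist x y) ^ (α - (n:ℝ)) := by rw [hnorm]
                _ ≤ C_CZ * (δ * r) ^ (α - (n:ℝ)) := by
                    apply mul_le_mul_of_nonneg_left _ hCZ.le
                    exact Real.rpow_le_rpow_of_nonpos (by positivity) hxy (by linarith)
                _ = P₀ := hP₀def.symm
            · rw [Set.indicator_of_notMem hy'', Set.indicator_of_notMem hy'']
              simp
          have hlint : (∫⁻ y, ENNReal.ofReal ‖Q''.indicator (fun y => K x y * f y) y‖ ∂σ)
              ≤ ENNReal.ofReal P₀ * σ Q' := by
            calc (∫⁻ y, ENNReal.ofReal ‖Q''.indicator (fun y => K x y * f y) y‖ ∂σ)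
                ≤ ∫⁻ y, Q''.indicator (fun _ => ENNReal.ofReal P₀) y ∂σ := lintegral_mono hpt
              _ = ENNReal.ofReal P₀ * σ Q'' := lintegral_indicator_const hQ''meas _
              _ ≤ ENNReal.ofReal P₀ * σ Q' := mul_le_mul_right (measure_mono hQ''subQ') _
          calc |∫ y, Q''.indicator (fun y => K x y * f y) y ∂σ|
              = ‖∫ y, Q''.indicator (fun y => K x y * f y) y ∂σ‖ :=
                (Real.norm_eq_abs _).symm
            _ ≤ (∫⁻ y, ENNReal.ofReal ‖Q''.indicator (fun y => K x y * f y) y‖ ∂σ).toReal :=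
                norm_integral_le_lintegral_norm _
            _ ≤ (ENNReal.ofReal P₀ * σ Q').toReal :=
                ENNReal.toReal_mono (ENNReal.mul_ne_top ENNReal.ofReal_ne_top hQ'fin) hlint
            _ = P₀ * S := by
                rw [ENNReal.toReal_mul, ENNReal.toReal_ofReal hP₀0.le]
        rw [hTfsplit]
        obtain ⟨ha1, ha2⟩ := abs_le.1 hbnd
        exact sq_add_le_two ha1 ha2
      · rw [hTf, integral_undef hint]
        have h0 : ((0:ℝ)) ^ 2 = 0 := by norm_num
        rw [h0]
        positivity
    -- L² bound for the ring part
    have hTh2 : ∫⁻ x, ENNReal.ofReal ((T h1 x) ^ 2) ∂ω ≤ ENNReal.ofReal (N ^ 2) * σ Ring := by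
      have hb := hbdd h1 hh1meas
      have heq : ∫⁻ x, ENNReal.ofReal ((h1 x) ^ 2) ∂σ = σ Ring := by
        rw [hh1def]; exact hfint Ring hRingmeas σ
      rwa [heq] at hb
    have chain1 : (∫⁻ x in E, ENNReal.ofReal ((T f x) ^ 2) ∂ω) ≤
        ENNReal.ofReal (2 * P ^ 2) * ω (Cube n c (3 * l)) +
          2 * (ENNReal.ofReal (N ^ 2) * σ Ring) := by
      have step1 : (∫⁻ x in E, ENNReal.ofReal ((T f x) ^ 2) ∂ω) ≤
          ∫⁻ x in E, (ENNReal.ofReal (2 * P ^ 2) + ENNReal.ofReal (2 * (T h1 x) ^ 2)) ∂ω := by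
        apply lintegral_mono_ae
        rw [ae_restrict_iff' hEmeas]
        apply ae_of_all
        intro x hx
        calc ENNReal.ofReal ((T f x) ^ 2)
            ≤ ENNReal.ofReal (2 * P ^ 2 + 2 * (T h1 x) ^ 2) :=
              ENNReal.ofReal_le_ofReal (key x hx)
          _ ≤ _ := ENNReal.ofReal_add_le
      refine step1.trans ?_
      rw [lintegral_add_left measurable_const, setLIntegral_const]
      refine add_le_add (mul_le_mul_right (measure_mono diff_subset) _) ?_
      calc ∫⁻ x in E, ENNReal.ofReal (2 * (T h1 x) ^ 2) ∂ω
          ≤ ∫⁻ x, ENNReal.ofReal (2 * (T h1 x) ^ 2) ∂ω :=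
            lintegral_mono' Measure.restrict_le_self le_rfl
        _ = 2 * ∫⁻ x, ENNReal.ofReal ((T h1 x) ^ 2) ∂ω := by
            rw [← lintegral_const_mul' 2 _ (by norm_num)]
            refine lintegral_congr fun x => ?_
            rw [ENNReal.ofReal_mul (by norm_num : (0:ℝ) ≤ 2)]
            norm_num
        _ ≤ 2 * (ENNReal.ofReal (N ^ 2) * σ Ring) := mul_le_mul_right hTh2 2
    -- numerics
    have hω3fin : ω (Cube n c (3 * l)) ≠ ⊤ := by
      rw [hcube3]; exact (isCompact_closedBall _ _).measure_lt_top.ne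
    have hσ3fin : σ (Cube n c (3 * l)) ≠ ⊤ := by
      rw [hcube3]; exact (isCompact_closedBall _ _).measure_lt_top.ne
    set ω3 : ℝ := (ω (Cube n c (3 * l))).toReal with hω3def
    have hω30 : 0 ≤ ω3 := ENNReal.toReal_nonneg
    have hsub3 : Q' ⊆ Cube n c (3 * l) := by
      refine hsub.trans fun x hx i => ?_
      have := hx i
      linarith [abs_nonneg (x i - c i)]
    have hS3 : S ≤ (σ (Cube n c (3 * l))).toReal :=
      ENNReal.toReal_mono hσ3fin (measure_mono hsub3)
    have hA2use := hA2c c (3 * l) (by linarith)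
    have hSω3 : S * ω3 ≤ A2 * (3 * l) ^ (2 * ((n:ℝ) - α)) :=
      le_trans (mul_le_mul_of_nonneg_right hS3 hω30) hA2use
    have hδr0 : 0 < δ * r := by positivity
    have h3l0' : (0:ℝ) < 3 * l := by linarith
    have hXeq : 3 * l / (δ * r) = X := by
      rw [hX, hrdef, hℓ']
      field_simp
      ring
    have hbig : P₀ ^ 2 * (3 * l) ^ (2 * ((n:ℝ) - α)) = C_CZ ^ 2 * X ^ (2 * ((n:ℝ) - α)) := by
      have e1 : ((δ * r) ^ (α - (n:ℝ))) ^ 2 = (δ * r) ^ (-(2 * ((n:ℝ) - α))) := by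
        rw [sq, ← Real.rpow_add hδr0]; congr 1; ring
      calc P₀ ^ 2 * (3 * l) ^ (2 * ((n:ℝ) - α))
          = C_CZ ^ 2 * (((δ * r) ^ (α - (n:ℝ))) ^ 2 * (3 * l) ^ (2 * ((n:ℝ) - α))) := by
            rw [hP₀def]; ring
        _ = C_CZ ^ 2 * ((3 * l) ^ (2 * ((n:ℝ) - α)) / (δ * r) ^ (2 * ((n:ℝ) - α))) := by
            rw [e1, Real.rpow_neg hδr0.le]; ring
        _ = C_CZ ^ 2 * (3 * l / (δ * r)) ^ (2 * ((n:ℝ) - α)) := by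
            rw [Real.div_rpow h3l0'.le hδr0.le]
        _ = C_CZ ^ 2 * X ^ (2 * ((n:ℝ) - α)) := by rw [hXeq]
    have hCsq : (Real.sqrt 2 * C_CZ * X ^ ((n:ℝ) - α)) ^ 2
        = 2 * (C_CZ ^ 2 * X ^ (2 * ((n:ℝ) - α))) := by
      have e2 : (X ^ ((n:ℝ) - α)) ^ 2 = X ^ (2 * ((n:ℝ) - α)) := by
        rw [sq, ← Real.rpow_add hX0]; congr 1; ring
      rw [mul_pow, mul_pow, Real.sq_sqrt (by norm_num : (0:ℝ) ≤ 2), e2]; ring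
    have realineq : 2 * P ^ 2 * ω3 + 2 * N ^ 2 * RingR ≤
        ((Real.sqrt 2 * C_CZ * X ^ ((n:ℝ) - α)) * Real.sqrt A2 + ε₁ * N) ^ 2 * S := by
      have p1 : 2 * P ^ 2 * ω3 ≤ (Real.sqrt 2 * C_CZ * X ^ ((n:ℝ) - α)) ^ 2 * A2 * S := by
        have e3 : 2 * P ^ 2 * ω3 = 2 * P₀ ^ 2 * S * (S * ω3) := by rw [hPdef]; ring
        rw [e3, hCsq]
        calc 2 * P₀ ^ 2 * S * (S * ω3)
            ≤ 2 * P₀ ^ 2 * S * (A2 * (3 * l) ^ (2 * ((n:ℝ) - α))) := by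
              apply mul_le_mul_of_nonneg_left hSω3 (by positivity)
          _ = 2 * (P₀ ^ 2 * (3 * l) ^ (2 * ((n:ℝ) - α))) * A2 * S := by ring
          _ = 2 * (C_CZ ^ 2 * X ^ (2 * ((n:ℝ) - α))) * A2 * S := by rw [hbig]
      have p2 : 2 * N ^ 2 * RingR ≤ ε₁ ^ 2 * N ^ 2 * S := by
        have h2θ : 2 * θ ^ J ≤ ε₁ ^ 2 := by linarith
        calc 2 * N ^ 2 * RingR ≤ 2 * N ^ 2 * (θ ^ J * S) := by
              apply mul_le_mul_of_nonneg_left hRingbound (by positivity)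
          _ = (2 * θ ^ J) * (N ^ 2 * S) := by ring
          _ ≤ ε₁ ^ 2 * (N ^ 2 * S) := by
              apply mul_le_mul_of_nonneg_right h2θ (by positivity)
          _ = ε₁ ^ 2 * N ^ 2 * S := by ring
      have hcrossS : 0 ≤ 2 * ((Real.sqrt 2 * C_CZ * X ^ ((n:ℝ) - α)) * Real.sqrt A2)
          * (ε₁ * N) * S := by positivity
      have p1' : 2 * P ^ 2 * ω3 ≤
          (Real.sqrt 2 * C_CZ * X ^ ((n:ℝ) - α)) ^ 2 * (Real.sqrt A2) ^ 2 * S := by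
        rw [Real.sq_sqrt hA2]; exact p1
      exact final_real p1' p2 hcrossS
    -- conclude
    calc (∫⁻ x in Cube n c (3 * l) \ Q', ENNReal.ofReal ((T f x) ^ 2) ∂ω)
        ≤ ENNReal.ofReal (2 * P ^ 2) * ω (Cube n c (3 * l)) +
            2 * (ENNReal.ofReal (N ^ 2) * σ Ring) := chain1
      _ = ENNReal.ofReal (2 * P ^ 2 * ω3 + 2 * N ^ 2 * RingR) := by
          rw [← ENNReal.ofReal_toReal hω3fin, ← ENNReal.ofReal_toReal hRingfin]
          rw [← ENNReal.ofReal_mul (by positivity : (0:ℝ) ≤ 2 * P ^ 2)]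
          rw [← ENNReal.ofReal_mul (by positivity : (0:ℝ) ≤ N ^ 2)]
          rw [show (2:ℝ≥0∞) = ENNReal.ofReal 2 by norm_num]
          rw [← ENNReal.ofReal_mul (by norm_num : (0:ℝ) ≤ 2)]
          rw [← ENNReal.ofReal_add (by positivity) (by positivity)]
          congr 1
          ring
      _ ≤ ENNReal.ofReal
            (((Real.sqrt 2 * C_CZ * X ^ ((n:ℝ) - α)) * Real.sqrt A2 + ε₁ * N) ^ 2 * S) :=
          ENNReal.ofReal_le_ofReal realineq
      _ = ENNReal.ofReal
            ((Real.sqrt 2 * C_CZ * X ^ ((n:ℝ) - α) * Real.sqrt A2 + ε₁ * N) ^ 2) * σ Q' := by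
          rw [ENNReal.ofReal_mul (sq_nonneg _), hSdef, ENNReal.ofReal_toReal hQ'fin]
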